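/- Let g(x) = min(x, 1−x) for x ∈ [0,1] and g(x) = 0 otherwise, and let g'(x) = 1 for x ∈ (0, 1/2), g'(x) = −1 for x ∈ (1/2, 1), and g'(x) = 0 otherwise. Define ψ̄(s) = ∫_0^1 ∫_{u−1+s}^{1+s+u} g(u)·g'(v) dv du for s ∈ ℝ. Then κ̄ := ∫_{−2}^{2} ψ̄(s)² ds = 151/20160. -/

import Mathlib

open intervalIntegral

noncomputable def tri (x : ℝ) : ℝ :=
  if x ∈ Set.Icc (0:ℝ) 1 then min x (1 - x) else 0

noncomputable def triDeriv (x : ℝ) : ℝ :=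
  if x ∈ Set.Ioo (0:ℝ) (1/2) then 1 else if x ∈ Set.Ioo (1/2 : ℝ) 1 then -1 else 0

noncomputable def psiBarTri (s : ℝ) : ℝ :=
  ∫ u in (0:ℝ)..1, ∫ v in (u - 1 + s)..(1 + s + u), tri u * triDeriv v

lemma tri_eq (x : ℝ) : tri x = max 0 (min x (1 - x)) := by
  unfold tri
  rcases le_or_gt 0 x with h0 | h0
  · rcases le_or_gt x 1 with h1 | h1
    · rw [if_pos ⟨h0, h1⟩, max_eq_right]
      rcases le_total x (1 - x) with h | h
      · rw [min_eq_left h]; linarith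
      · rw [min_eq_right h]; linarith
    · rw [if_neg (by simp [Set.mem_Icc]; intro; linarith), max_eq_left]
      rw [min_eq_right (by linarith)]; linarith
  · rw [if_neg (by simp [Set.mem_Icc]; intro; linarith), max_eq_left]
    rw [min_eq_left (by linarith)]; linarith

lemma tri_cont : Continuous tri := by
  have : tri = fun x => max 0 (min x (1 - x)) := funext tri_eq
  rw [this]; fun_prop

lemma tri_nonpos {x : ℝ} (h : x ≤ 0) : tri x = 0 := by
  rw [tri_eq, max_eq_left]; rw [min_eq_left (by linarith)]; linarith

lemma tri_ge_one {x : ℝ} (h : 1 ≤ x) : tri x = 0 := by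
  rw [tri_eq, max_eq_left]; rw [min_eq_right (by linarith)]; linarith

lemma tri_lo {x : ℝ} (h0 : 0 ≤ x) (h : x ≤ 1/2) : tri x = x := by
  rw [tri_eq, min_eq_left (by linarith), max_eq_right h0]

lemma tri_hi {x : ℝ} (h : 1/2 ≤ x) (h1 : x ≤ 1) : tri x = 1 - x := by
  rw [tri_eq, min_eq_right (by linarith), max_eq_right (by linarith)]

lemma triDeriv_II (a b : ℝ) : IntervalIntegrable triDeriv MeasureTheory.volume a b := by
  have hm : Measurable triDeriv := by
    unfold triDeriv
    exact Measurable.ite measurableSet_Ioo measurable_const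
      (Measurable.ite measurableSet_Ioo measurable_const measurable_const)
  rw [intervalIntegrable_iff]
  apply MeasureTheory.Integrable.mono' (g := fun _ => (1:ℝ))
  · exact MeasureTheory.integrableOn_const measure_Ioc_lt_top.ne
  · exact hm.aestronglyMeasurable
  · refine MeasureTheory.ae_of_all _ fun x => ?_
    unfold triDeriv
    split <;> [skip; split] <;> simp

lemma hasDerivAt_tri {x : ℝ} (h0 : x ≠ 0) (hh : x ≠ 1/2) (h1 : x ≠ 1) :
    HasDerivAt tri (triDeriv x) x := by
  have key : ∀ (U : Set ℝ), IsOpen U → x ∈ U → (∀ y ∈ U, tri y = (fun y => tri y) y) → True := fun _ _ _ _ => trivial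
  rcases lt_trichotomy x 0 with hx | rfl | hx
  · have he : tri =ᶠ[nhds x] fun _ => (0:ℝ) :=
      Filter.eventuallyEq_of_mem (Iio_mem_nhds hx) fun y hy => tri_nonpos (le_of_lt hy)
    have hd : triDeriv x = 0 := by
      unfold triDeriv
      rw [if_neg (by simp [Set.mem_Ioo]; intro; linarith),
          if_neg (by simp [Set.mem_Ioo]; intro; linarith)]
    rw [hd]
    exact (hasDerivAt_const x (0:ℝ)).congr_of_eventuallyEq he
  · exact absurd rfl h0
  rcases lt_trichotomy x (1/2) with hx2 | rfl | hx2
  · have he : tri =ᶠ[nhds x] fun y => y :=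
      Filter.eventuallyEq_of_mem (IsOpen.mem_nhds isOpen_Ioo (Set.mem_Ioo.2 ⟨hx, hx2⟩))
        fun y hy => tri_lo (le_of_lt hy.1) (le_of_lt hy.2)
    have hd : triDeriv x = 1 := by
      unfold triDeriv; rw [if_pos (Set.mem_Ioo.2 ⟨hx, hx2⟩)]
    rw [hd]
    exact (hasDerivAt_id x).congr_of_eventuallyEq he
  · exact absurd rfl hh
  rcases lt_trichotomy x 1 with hx3 | rfl | hx3
  · have he : tri =ᶠ[nhds x] fun y => 1 - y :=
      Filter.eventuallyEq_of_mem (IsOpen.mem_nhds isOpen_Ioo (Set.mem_Ioo.2 ⟨hx2, hx3⟩))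
        fun y hy => tri_hi (le_of_lt hy.1) (le_of_lt hy.2)
    have hd : triDeriv x = -1 := by
      unfold triDeriv
      rw [if_neg (by simp [Set.mem_Ioo]; intro; linarith), if_pos (Set.mem_Ioo.2 ⟨hx2, hx3⟩)]
    rw [hd]
    have : HasDerivAt (fun y : ℝ => 1 - y) (-1) x := by
      simpa using (hasDerivAt_id x).const_sub 1
    exact this.congr_of_eventuallyEq he
  · exact absurd rfl h1
  · have he : tri =ᶠ[nhds x] fun _ => (0:ℝ) :=
      Filter.eventuallyEq_of_mem (Ioi_mem_nhds hx3) fun y hy => tri_ge_one (le_of_lt hy)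
    have hd : triDeriv x = 0 := by
      unfold triDeriv
      rw [if_neg (by simp [Set.mem_Ioo]; intro; linarith),
          if_neg (by simp [Set.mem_Ioo]; intro _; linarith)]
    rw [hd]
    exact (hasDerivAt_const x (0:ℝ)).congr_of_eventuallyEq he

lemma integral_triDeriv (a b : ℝ) : ∫ v in a..b, triDeriv v = tri b - tri a := by
  have key : ∀ a b : ℝ, a ≤ b → ∫ v in a..b, triDeriv v = tri b - tri a := by
    intro a b hab
    refine MeasureTheory.integral_eq_of_hasDerivAt_off_countable_of_le tri triDeriv hab
      (s := {0, 1/2, 1}) (Set.Countable.insert _ (Set.Countable.insert _ (Set.countable_singleton _)))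
      (tri_cont.continuousOn) ?_ (triDeriv_II a b)
    intro x hx
    simp only [Set.mem_diff, Set.mem_insert_iff, Set.mem_singleton_iff, not_or] at hx
    exact hasDerivAt_tri hx.2.1 hx.2.2.1 hx.2.2.2
  rcases le_total a b with h | h
  · exact key a b h
  · rw [intervalIntegral.integral_symm, key b a h]; ring

lemma psiBar_eq (s : ℝ) :
    psiBarTri s = ∫ u in (0:ℝ)..1, tri u * (tri (1 + s + u) - tri (u - 1 + s)) := by
  have h : ∀ u : ℝ, (∫ v in (u - 1 + s)..(1 + s + u), tri u * triDeriv v) =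
      tri u * (tri (1 + s + u) - tri (u - 1 + s)) := fun u => by
    rw [intervalIntegral.integral_const_mul, integral_triDeriv]
  simp only [psiBarTri, h]

lemma integrand_cont (s : ℝ) :
    Continuous fun u => tri u * (tri (1 + s + u) - tri (u - 1 + s)) := by
  have h := tri_cont
  fun_prop

lemma integral_eq_of_eqOn {f g : ℝ → ℝ} {a b : ℝ} (hab : a ≤ b)
    (h : ∀ x ∈ Set.Icc a b, f x = g x) :
    ∫ x in a..b, f x = ∫ x in a..b, g x :=
  intervalIntegral.integral_congr (fun x hx => h x (by rwa [Set.uIcc_of_le hab] at hx))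

lemma II_of_eqOn {f : ℝ → ℝ} (g : ℝ → ℝ) {a b : ℝ} (hab : a ≤ b)
    (h : ∀ x ∈ Set.Icc a b, f x = g x) (hg : Continuous g) :
    IntervalIntegrable f MeasureTheory.volume a b := by
  rw [intervalIntegrable_iff_integrableOn_Icc_of_le hab]
  exact MeasureTheory.IntegrableOn.congr_fun
    (hg.integrableOn_Icc) (fun x hx => (h x hx).symm) measurableSet_Icc

lemma hasDerivAt_poly7 (A1 A2 A3 A4 A5 A6 A7 x : ℝ) :
    HasDerivAt (fun x : ℝ => A1 * x + A2 * x^2 + A3 * x^3 + A4 * x^4 + A5 * x^5 + A6 * x^6 + A7 * x^7)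
      (A1 + 2*A2*x + 3*A3*x^2 + 4*A4*x^3 + 5*A5*x^4 + 6*A6*x^5 + 7*A7*x^6) x := by
  have h : HasDerivAt (fun x : ℝ => A1 * x + A2 * x^2 + A3 * x^3 + A4 * x^4 + A5 * x^5 + A6 * x^6 + A7 * x^7)
      (A1 * 1 + A2 * (2 * x^1) + A3 * (3 * x^2) + A4 * (4 * x^3) + A5 * (5 * x^4) + A6 * (6 * x^5) + A7 * (7 * x^6)) x := by
    exact (((((((hasDerivAt_id x).const_mul A1).add ((hasDerivAt_pow 2 x).const_mul A2)).add
      ((hasDerivAt_pow 3 x).const_mul A3)).add ((hasDerivAt_pow 4 x).const_mul A4)).add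
      ((hasDerivAt_pow 5 x).const_mul A5)).add ((hasDerivAt_pow 6 x).const_mul A6)).add
      ((hasDerivAt_pow 7 x).const_mul A7)
  convert h using 1
  ring

lemma integ_cubic (c0 c1 c2 c3 a b : ℝ) :
    ∫ x in a..b, (c0 + c1 * x + c2 * x^2 + c3 * x^3) =
      (c0 * b + c1/2 * b^2 + c2/3 * b^3 + c3/4 * b^4) -
      (c0 * a + c1/2 * a^2 + c2/3 * a^3 + c3/4 * a^4) := by
  apply intervalIntegral.integral_eq_sub_of_hasDerivAt
    (f := fun x => c0 * x + c1/2 * x^2 + c2/3 * x^3 + c3/4 * x^4)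
  · intro x hx
    have h : HasDerivAt (fun x : ℝ => c0 * x + c1/2 * x^2 + c2/3 * x^3 + c3/4 * x^4)
        (c0 * 1 + c1/2 * (2 * x^1) + c2/3 * (3 * x^2) + c3/4 * (4 * x^3)) x :=
      ((((hasDerivAt_id x).const_mul c0).add ((hasDerivAt_pow 2 x).const_mul (c1/2))).add
        ((hasDerivAt_pow 3 x).const_mul (c2/3))).add ((hasDerivAt_pow 4 x).const_mul (c3/4))
    exact h.congr_deriv (by ring)
  · exact (Continuous.intervalIntegrable (by fun_prop) _ _)

lemma integ_sq_cubic (c0 c1 c2 c3 a b : ℝ) :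
    ∫ x in a..b, (c0 + c1 * x + c2 * x^2 + c3 * x^3)^2 =
      (c0^2 * b + (c0*c1) * b^2 + (c1^2 + 2*c0*c2)/3 * b^3 + (2*c0*c3 + 2*c1*c2)/4 * b^4
        + (c2^2 + 2*c1*c3)/5 * b^5 + (2*c2*c3)/6 * b^6 + c3^2/7 * b^7) -
      (c0^2 * a + (c0*c1) * a^2 + (c1^2 + 2*c0*c2)/3 * a^3 + (2*c0*c3 + 2*c1*c2)/4 * a^4
        + (c2^2 + 2*c1*c3)/5 * a^5 + (2*c2*c3)/6 * a^6 + c3^2/7 * a^7) := by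
  apply intervalIntegral.integral_eq_sub_of_hasDerivAt
    (f := fun x => c0^2 * x + (c0*c1) * x^2 + (c1^2 + 2*c0*c2)/3 * x^3 + (2*c0*c3 + 2*c1*c2)/4 * x^4
        + (c2^2 + 2*c1*c3)/5 * x^5 + (2*c2*c3)/6 * x^6 + c3^2/7 * x^7)
  · intro x hx
    exact (hasDerivAt_poly7 (c0^2) (c0*c1) ((c1^2 + 2*c0*c2)/3) ((2*c0*c3 + 2*c1*c2)/4)
      ((c2^2 + 2*c1*c3)/5) ((2*c2*c3)/6) (c3^2/7) x).congr_deriv (by ring)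
  · exact (Continuous.intervalIntegrable (by fun_prop) _ _)

lemma psiH {s : ℝ} (hs0 : (-2:ℝ) ≤ s) (hs1 : s ≤ (-3/2:ℝ)) :
    psiBarTri s = (2+s)^3/6 := by
  rw [psiBar_eq]
  have hc := integrand_cont s
  rw [← intervalIntegral.integral_add_adjacent_intervals (a := (0:ℝ)) (b := (-1-s:ℝ)) (c := (1:ℝ)) (hc.intervalIntegrable _ _) (hc.intervalIntegrable _ _)]
  have e1 : ∫ u in (0:ℝ)..(-1-s:ℝ), tri u * (tri (1 + s + u) - tri (u - 1 + s)) =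
      ∫ u in (0:ℝ)..(-1-s:ℝ), ((0) + (0) * u + (0) * u^2 + (0) * u^3) := by
    refine integral_eq_of_eqOn (by linarith) fun u hu => ?_
    obtain ⟨hu1, hu2⟩ := hu
    rw [tri_nonpos (x := 1+s+u) (by linarith), tri_nonpos (x := u-1+s) (by linarith)]
    ring
  have e2 : ∫ u in (-1-s:ℝ)..(1:ℝ), tri u * (tri (1 + s + u) - tri (u - 1 + s)) =
      ∫ u in (-1-s:ℝ)..(1:ℝ), ((1+s) + (-s) * u + (-1) * u^2 + (0) * u^3) := by
    refine integral_eq_of_eqOn (by linarith) fun u hu => ?_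
    obtain ⟨hu1, hu2⟩ := hu
    rw [tri_lo (x := 1+s+u) (by linarith) (by linarith), tri_nonpos (x := u-1+s) (by linarith), tri_hi (x := u) (by linarith) (by linarith)]
    ring
  rw [e1, e2]
  rw [integ_cubic, integ_cubic]
  ring

lemma psiG {s : ℝ} (hs0 : (-3/2:ℝ) ≤ s) (hs1 : s ≤ (-1:ℝ)) :
    psiBarTri s = 1/12 - (s+1)^2/2 - (s+1)^3/2 := by
  rw [psiBar_eq]
  have hc := integrand_cont s
  rw [← intervalIntegral.integral_add_adjacent_intervals (a := (0:ℝ)) (b := (-1-s:ℝ)) (c := (1:ℝ)) (hc.intervalIntegrable _ _) (hc.intervalIntegrable _ _),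
    ← intervalIntegral.integral_add_adjacent_intervals (a := (-1-s:ℝ)) (b := (1/2:ℝ)) (c := (1:ℝ)) (hc.intervalIntegrable _ _) (hc.intervalIntegrable _ _),
    ← intervalIntegral.integral_add_adjacent_intervals (a := (1/2:ℝ)) (b := (-1/2-s:ℝ)) (c := (1:ℝ)) (hc.intervalIntegrable _ _) (hc.intervalIntegrable _ _)]
  have e1 : ∫ u in (0:ℝ)..(-1-s:ℝ), tri u * (tri (1 + s + u) - tri (u - 1 + s)) =
      ∫ u in (0:ℝ)..(-1-s:ℝ), ((0) + (0) * u + (0) * u^2 + (0) * u^3) := by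
    refine integral_eq_of_eqOn (by linarith) fun u hu => ?_
    obtain ⟨hu1, hu2⟩ := hu
    rw [tri_nonpos (x := 1+s+u) (by linarith), tri_nonpos (x := u-1+s) (by linarith)]
    ring
  have e2 : ∫ u in (-1-s:ℝ)..(1/2:ℝ), tri u * (tri (1 + s + u) - tri (u - 1 + s)) =
      ∫ u in (-1-s:ℝ)..(1/2:ℝ), ((0) + (1+s) * u + (1) * u^2 + (0) * u^3) := by
    refine integral_eq_of_eqOn (by linarith) fun u hu => ?_
    obtain ⟨hu1, hu2⟩ := hu
    rw [tri_lo (x := 1+s+u) (by linarith) (by linarith), tri_nonpos (x := u-1+s) (by linarith), tri_lo (x := u) (by linarith) (by linarith)]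
    ring
  have e3 : ∫ u in (1/2:ℝ)..(-1/2-s:ℝ), tri u * (tri (1 + s + u) - tri (u - 1 + s)) =
      ∫ u in (1/2:ℝ)..(-1/2-s:ℝ), ((1+s) + (-s) * u + (-1) * u^2 + (0) * u^3) := by
    refine integral_eq_of_eqOn (by linarith) fun u hu => ?_
    obtain ⟨hu1, hu2⟩ := hu
    rw [tri_lo (x := 1+s+u) (by linarith) (by linarith), tri_nonpos (x := u-1+s) (by linarith), tri_hi (x := u) (by linarith) (by linarith)]
    ring
  have e4 : ∫ u in (-1/2-s:ℝ)..(1:ℝ), tri u * (tri (1 + s + u) - tri (u - 1 + s)) =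
      ∫ u in (-1/2-s:ℝ)..(1:ℝ), ((-s) + (s-1) * u + (1) * u^2 + (0) * u^3) := by
    refine integral_eq_of_eqOn (by linarith) fun u hu => ?_
    obtain ⟨hu1, hu2⟩ := hu
    rw [tri_hi (x := 1+s+u) (by linarith) (by linarith), tri_nonpos (x := u-1+s) (by linarith), tri_hi (x := u) (by linarith) (by linarith)]
    ring
  rw [e1, e2, e3, e4]
  rw [integ_cubic, integ_cubic, integ_cubic, integ_cubic]
  ring

lemma psiF {s : ℝ} (hs0 : (-1:ℝ) ≤ s) (hs1 : s ≤ (-1/2:ℝ)) :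
    psiBarTri s = 1/12 - (s+1)^2/2 + (s+1)^3/2 := by
  rw [psiBar_eq]
  have hc := integrand_cont s
  rw [← intervalIntegral.integral_add_adjacent_intervals (a := (0:ℝ)) (b := (-1/2-s:ℝ)) (c := (1:ℝ)) (hc.intervalIntegrable _ _) (hc.intervalIntegrable _ _),
    ← intervalIntegral.integral_add_adjacent_intervals (a := (-1/2-s:ℝ)) (b := (1/2:ℝ)) (c := (1:ℝ)) (hc.intervalIntegrable _ _) (hc.intervalIntegrable _ _),
    ← intervalIntegral.integral_add_adjacent_intervals (a := (1/2:ℝ)) (b := (-s:ℝ)) (c := (1:ℝ)) (hc.intervalIntegrable _ _) (hc.intervalIntegrable _ _)]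
  have e1 : ∫ u in (0:ℝ)..(-1/2-s:ℝ), tri u * (tri (1 + s + u) - tri (u - 1 + s)) =
      ∫ u in (0:ℝ)..(-1/2-s:ℝ), ((0) + (1+s) * u + (1) * u^2 + (0) * u^3) := by
    refine integral_eq_of_eqOn (by linarith) fun u hu => ?_
    obtain ⟨hu1, hu2⟩ := hu
    rw [tri_lo (x := 1+s+u) (by linarith) (by linarith), tri_nonpos (x := u-1+s) (by linarith), tri_lo (x := u) (by linarith) (by linarith)]
    ring
  have e2 : ∫ u in (-1/2-s:ℝ)..(1/2:ℝ), tri u * (tri (1 + s + u) - tri (u - 1 + s)) =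
      ∫ u in (-1/2-s:ℝ)..(1/2:ℝ), ((0) + (-s) * u + (-1) * u^2 + (0) * u^3) := by
    refine integral_eq_of_eqOn (by linarith) fun u hu => ?_
    obtain ⟨hu1, hu2⟩ := hu
    rw [tri_hi (x := 1+s+u) (by linarith) (by linarith), tri_nonpos (x := u-1+s) (by linarith), tri_lo (x := u) (by linarith) (by linarith)]
    ring
  have e3 : ∫ u in (1/2:ℝ)..(-s:ℝ), tri u * (tri (1 + s + u) - tri (u - 1 + s)) =
      ∫ u in (1/2:ℝ)..(-s:ℝ), ((-s) + (s-1) * u + (1) * u^2 + (0) * u^3) := by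
    refine integral_eq_of_eqOn (by linarith) fun u hu => ?_
    obtain ⟨hu1, hu2⟩ := hu
    rw [tri_hi (x := 1+s+u) (by linarith) (by linarith), tri_nonpos (x := u-1+s) (by linarith), tri_hi (x := u) (by linarith) (by linarith)]
    ring
  have e4 : ∫ u in (-s:ℝ)..(1:ℝ), tri u * (tri (1 + s + u) - tri (u - 1 + s)) =
      ∫ u in (-s:ℝ)..(1:ℝ), ((0) + (0) * u + (0) * u^2 + (0) * u^3) := by
    refine integral_eq_of_eqOn (by linarith) fun u hu => ?_
    obtain ⟨hu1, hu2⟩ := hu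
    rw [tri_ge_one (x := 1+s+u) (by linarith), tri_nonpos (x := u-1+s) (by linarith)]
    ring
  rw [e1, e2, e3, e4]
  rw [integ_cubic, integ_cubic, integ_cubic, integ_cubic]
  ring

lemma psiE {s : ℝ} (hs0 : (-1/2:ℝ) ≤ s) (hs1 : s ≤ (0:ℝ)) :
    psiBarTri s = -s^3/6 := by
  rw [psiBar_eq]
  have hc := integrand_cont s
  rw [← intervalIntegral.integral_add_adjacent_intervals (a := (0:ℝ)) (b := (-s:ℝ)) (c := (1:ℝ)) (hc.intervalIntegrable _ _) (hc.intervalIntegrable _ _)]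
  have e1 : ∫ u in (0:ℝ)..(-s:ℝ), tri u * (tri (1 + s + u) - tri (u - 1 + s)) =
      ∫ u in (0:ℝ)..(-s:ℝ), ((0) + (-s) * u + (-1) * u^2 + (0) * u^3) := by
    refine integral_eq_of_eqOn (by linarith) fun u hu => ?_
    obtain ⟨hu1, hu2⟩ := hu
    rw [tri_hi (x := 1+s+u) (by linarith) (by linarith), tri_nonpos (x := u-1+s) (by linarith), tri_lo (x := u) (by linarith) (by linarith)]
    ring
  have e2 : ∫ u in (-s:ℝ)..(1:ℝ), tri u * (tri (1 + s + u) - tri (u - 1 + s)) =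
      ∫ u in (-s:ℝ)..(1:ℝ), ((0) + (0) * u + (0) * u^2 + (0) * u^3) := by
    refine integral_eq_of_eqOn (by linarith) fun u hu => ?_
    obtain ⟨hu1, hu2⟩ := hu
    rw [tri_ge_one (x := 1+s+u) (by linarith), tri_nonpos (x := u-1+s) (by linarith)]
    ring
  rw [e1, e2]
  rw [integ_cubic, integ_cubic]
  ring

lemma psiD {s : ℝ} (hs0 : (0:ℝ) ≤ s) (hs1 : s ≤ (1/2:ℝ)) :
    psiBarTri s = -s^3/6 := by
  rw [psiBar_eq]
  have hc := integrand_cont s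
  rw [← intervalIntegral.integral_add_adjacent_intervals (a := (0:ℝ)) (b := (1-s:ℝ)) (c := (1:ℝ)) (hc.intervalIntegrable _ _) (hc.intervalIntegrable _ _)]
  have e1 : ∫ u in (0:ℝ)..(1-s:ℝ), tri u * (tri (1 + s + u) - tri (u - 1 + s)) =
      ∫ u in (0:ℝ)..(1-s:ℝ), ((0) + (0) * u + (0) * u^2 + (0) * u^3) := by
    refine integral_eq_of_eqOn (by linarith) fun u hu => ?_
    obtain ⟨hu1, hu2⟩ := hu
    rw [tri_ge_one (x := 1+s+u) (by linarith), tri_nonpos (x := u-1+s) (by linarith)]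
    ring
  have e2 : ∫ u in (1-s:ℝ)..(1:ℝ), tri u * (tri (1 + s + u) - tri (u - 1 + s)) =
      ∫ u in (1-s:ℝ)..(1:ℝ), ((1-s) + (s-2) * u + (1) * u^2 + (0) * u^3) := by
    refine integral_eq_of_eqOn (by linarith) fun u hu => ?_
    obtain ⟨hu1, hu2⟩ := hu
    rw [tri_ge_one (x := 1+s+u) (by linarith), tri_lo (x := u-1+s) (by linarith) (by linarith), tri_hi (x := u) (by linarith) (by linarith)]
    ring
  rw [e1, e2]
  rw [integ_cubic, integ_cubic]
  ring

lemma psiC {s : ℝ} (hs0 : (1/2:ℝ) ≤ s) (hs1 : s ≤ (1:ℝ)) :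
    psiBarTri s = -(1/12 - (1-s)^2/2 + (1-s)^3/2) := by
  rw [psiBar_eq]
  have hc := integrand_cont s
  rw [← intervalIntegral.integral_add_adjacent_intervals (a := (0:ℝ)) (b := (1-s:ℝ)) (c := (1:ℝ)) (hc.intervalIntegrable _ _) (hc.intervalIntegrable _ _),
    ← intervalIntegral.integral_add_adjacent_intervals (a := (1-s:ℝ)) (b := (1/2:ℝ)) (c := (1:ℝ)) (hc.intervalIntegrable _ _) (hc.intervalIntegrable _ _),
    ← intervalIntegral.integral_add_adjacent_intervals (a := (1/2:ℝ)) (b := (3/2-s:ℝ)) (c := (1:ℝ)) (hc.intervalIntegrable _ _) (hc.intervalIntegrable _ _)]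
  have e1 : ∫ u in (0:ℝ)..(1-s:ℝ), tri u * (tri (1 + s + u) - tri (u - 1 + s)) =
      ∫ u in (0:ℝ)..(1-s:ℝ), ((0) + (0) * u + (0) * u^2 + (0) * u^3) := by
    refine integral_eq_of_eqOn (by linarith) fun u hu => ?_
    obtain ⟨hu1, hu2⟩ := hu
    rw [tri_ge_one (x := 1+s+u) (by linarith), tri_nonpos (x := u-1+s) (by linarith)]
    ring
  have e2 : ∫ u in (1-s:ℝ)..(1/2:ℝ), tri u * (tri (1 + s + u) - tri (u - 1 + s)) =
      ∫ u in (1-s:ℝ)..(1/2:ℝ), ((0) + (1-s) * u + (-1) * u^2 + (0) * u^3) := by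
    refine integral_eq_of_eqOn (by linarith) fun u hu => ?_
    obtain ⟨hu1, hu2⟩ := hu
    rw [tri_ge_one (x := 1+s+u) (by linarith), tri_lo (x := u-1+s) (by linarith) (by linarith), tri_lo (x := u) (by linarith) (by linarith)]
    ring
  have e3 : ∫ u in (1/2:ℝ)..(3/2-s:ℝ), tri u * (tri (1 + s + u) - tri (u - 1 + s)) =
      ∫ u in (1/2:ℝ)..(3/2-s:ℝ), ((1-s) + (s-2) * u + (1) * u^2 + (0) * u^3) := by
    refine integral_eq_of_eqOn (by linarith) fun u hu => ?_
    obtain ⟨hu1, hu2⟩ := hu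
    rw [tri_ge_one (x := 1+s+u) (by linarith), tri_lo (x := u-1+s) (by linarith) (by linarith), tri_hi (x := u) (by linarith) (by linarith)]
    ring
  have e4 : ∫ u in (3/2-s:ℝ)..(1:ℝ), tri u * (tri (1 + s + u) - tri (u - 1 + s)) =
      ∫ u in (3/2-s:ℝ)..(1:ℝ), ((s-2) + (3-s) * u + (-1) * u^2 + (0) * u^3) := by
    refine integral_eq_of_eqOn (by linarith) fun u hu => ?_
    obtain ⟨hu1, hu2⟩ := hu
    rw [tri_ge_one (x := 1+s+u) (by linarith), tri_hi (x := u-1+s) (by linarith) (by linarith), tri_hi (x := u) (by linarith) (by linarith)]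
    ring
  rw [e1, e2, e3, e4]
  rw [integ_cubic, integ_cubic, integ_cubic, integ_cubic]
  ring

lemma psiB {s : ℝ} (hs0 : (1:ℝ) ≤ s) (hs1 : s ≤ (3/2:ℝ)) :
    psiBarTri s = -(1/12 - (s-1)^2/2 + (s-1)^3/2) := by
  rw [psiBar_eq]
  have hc := integrand_cont s
  rw [← intervalIntegral.integral_add_adjacent_intervals (a := (0:ℝ)) (b := (3/2-s:ℝ)) (c := (1:ℝ)) (hc.intervalIntegrable _ _) (hc.intervalIntegrable _ _),
    ← intervalIntegral.integral_add_adjacent_intervals (a := (3/2-s:ℝ)) (b := (1/2:ℝ)) (c := (1:ℝ)) (hc.intervalIntegrable _ _) (hc.intervalIntegrable _ _),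
    ← intervalIntegral.integral_add_adjacent_intervals (a := (1/2:ℝ)) (b := (2-s:ℝ)) (c := (1:ℝ)) (hc.intervalIntegrable _ _) (hc.intervalIntegrable _ _)]
  have e1 : ∫ u in (0:ℝ)..(3/2-s:ℝ), tri u * (tri (1 + s + u) - tri (u - 1 + s)) =
      ∫ u in (0:ℝ)..(3/2-s:ℝ), ((0) + (1-s) * u + (-1) * u^2 + (0) * u^3) := by
    refine integral_eq_of_eqOn (by linarith) fun u hu => ?_
    obtain ⟨hu1, hu2⟩ := hu
    rw [tri_ge_one (x := 1+s+u) (by linarith), tri_lo (x := u-1+s) (by linarith) (by linarith), tri_lo (x := u) (by linarith) (by linarith)]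
    ring
  have e2 : ∫ u in (3/2-s:ℝ)..(1/2:ℝ), tri u * (tri (1 + s + u) - tri (u - 1 + s)) =
      ∫ u in (3/2-s:ℝ)..(1/2:ℝ), ((0) + (s-2) * u + (1) * u^2 + (0) * u^3) := by
    refine integral_eq_of_eqOn (by linarith) fun u hu => ?_
    obtain ⟨hu1, hu2⟩ := hu
    rw [tri_ge_one (x := 1+s+u) (by linarith), tri_hi (x := u-1+s) (by linarith) (by linarith), tri_lo (x := u) (by linarith) (by linarith)]
    ring
  have e3 : ∫ u in (1/2:ℝ)..(2-s:ℝ), tri u * (tri (1 + s + u) - tri (u - 1 + s)) =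
      ∫ u in (1/2:ℝ)..(2-s:ℝ), ((s-2) + (3-s) * u + (-1) * u^2 + (0) * u^3) := by
    refine integral_eq_of_eqOn (by linarith) fun u hu => ?_
    obtain ⟨hu1, hu2⟩ := hu
    rw [tri_ge_one (x := 1+s+u) (by linarith), tri_hi (x := u-1+s) (by linarith) (by linarith), tri_hi (x := u) (by linarith) (by linarith)]
    ring
  have e4 : ∫ u in (2-s:ℝ)..(1:ℝ), tri u * (tri (1 + s + u) - tri (u - 1 + s)) =
      ∫ u in (2-s:ℝ)..(1:ℝ), ((0) + (0) * u + (0) * u^2 + (0) * u^3) := by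
    refine integral_eq_of_eqOn (by linarith) fun u hu => ?_
    obtain ⟨hu1, hu2⟩ := hu
    rw [tri_ge_one (x := 1+s+u) (by linarith), tri_ge_one (x := u-1+s) (by linarith)]
    ring
  rw [e1, e2, e3, e4]
  rw [integ_cubic, integ_cubic, integ_cubic, integ_cubic]
  ring

lemma psiA {s : ℝ} (hs0 : (3/2:ℝ) ≤ s) (hs1 : s ≤ (2:ℝ)) :
    psiBarTri s = -(2-s)^3/6 := by
  rw [psiBar_eq]
  have hc := integrand_cont s
  rw [← intervalIntegral.integral_add_adjacent_intervals (a := (0:ℝ)) (b := (2-s:ℝ)) (c := (1:ℝ)) (hc.intervalIntegrable _ _) (hc.intervalIntegrable _ _)]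
  have e1 : ∫ u in (0:ℝ)..(2-s:ℝ), tri u * (tri (1 + s + u) - tri (u - 1 + s)) =
      ∫ u in (0:ℝ)..(2-s:ℝ), ((0) + (s-2) * u + (1) * u^2 + (0) * u^3) := by
    refine integral_eq_of_eqOn (by linarith) fun u hu => ?_
    obtain ⟨hu1, hu2⟩ := hu
    rw [tri_ge_one (x := 1+s+u) (by linarith), tri_hi (x := u-1+s) (by linarith) (by linarith), tri_lo (x := u) (by linarith) (by linarith)]
    ring
  have e2 : ∫ u in (2-s:ℝ)..(1:ℝ), tri u * (tri (1 + s + u) - tri (u - 1 + s)) =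
      ∫ u in (2-s:ℝ)..(1:ℝ), ((0) + (0) * u + (0) * u^2 + (0) * u^3) := by
    refine integral_eq_of_eqOn (by linarith) fun u hu => ?_
    obtain ⟨hu1, hu2⟩ := hu
    rw [tri_ge_one (x := 1+s+u) (by linarith), tri_ge_one (x := u-1+s) (by linarith)]
    ring
  rw [e1, e2]
  rw [integ_cubic, integ_cubic]
  ring

/-- For the triangular weight function `g(x) = min(x, 1−x)` on `[0,1]` with
a.e. derivative `g'`, `κ̄ = ∫_{−2}^{2} ψ̄(s,1)² ds = 151/20160`. -/
theorem stmt_13 : ∫ s in (-2:ℝ)..2, (psiBarTri s) ^ 2 = 151 / 20160 := by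
  have E1 : ∀ x ∈ Set.Icc (-2:ℝ) (-3/2:ℝ), psiBarTri x ^ 2 =
      ((4/3) + (2) * x + (1) * x^2 + (1/6) * x^3)^2 := by
    intro x hx
    obtain ⟨h1, h2⟩ := hx
    rw [psiH (by linarith) (by linarith)]; ring
  have E2 : ∀ x ∈ Set.Icc (-3/2:ℝ) (-1:ℝ), psiBarTri x ^ 2 =
      ((-11/12) + (-5/2) * x + (-2) * x^2 + (-1/2) * x^3)^2 := by
    intro x hx
    obtain ⟨h1, h2⟩ := hx
    rw [psiG (by linarith) (by linarith)]; ring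
  have E3 : ∀ x ∈ Set.Icc (-1:ℝ) (-1/2:ℝ), psiBarTri x ^ 2 =
      ((1/12) + (1/2) * x + (1) * x^2 + (1/2) * x^3)^2 := by
    intro x hx
    obtain ⟨h1, h2⟩ := hx
    rw [psiF (by linarith) (by linarith)]; ring
  have E4 : ∀ x ∈ Set.Icc (-1/2:ℝ) (0:ℝ), psiBarTri x ^ 2 =
      ((0) + (0) * x + (0) * x^2 + (-1/6) * x^3)^2 := by
    intro x hx
    obtain ⟨h1, h2⟩ := hx
    rw [psiE (by linarith) (by linarith)]; ring
  have E5 : ∀ x ∈ Set.Icc (0:ℝ) (1/2:ℝ), psiBarTri x ^ 2 =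
      ((0) + (0) * x + (0) * x^2 + (-1/6) * x^3)^2 := by
    intro x hx
    obtain ⟨h1, h2⟩ := hx
    rw [psiD (by linarith) (by linarith)]; ring
  have E6 : ∀ x ∈ Set.Icc (1/2:ℝ) (1:ℝ), psiBarTri x ^ 2 =
      ((-1/12) + (1/2) * x + (-1) * x^2 + (1/2) * x^3)^2 := by
    intro x hx
    obtain ⟨h1, h2⟩ := hx
    rw [psiC (by linarith) (by linarith)]; ring
  have E7 : ∀ x ∈ Set.Icc (1:ℝ) (3/2:ℝ), psiBarTri x ^ 2 =
      ((11/12) + (-5/2) * x + (2) * x^2 + (-1/2) * x^3)^2 := by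
    intro x hx
    obtain ⟨h1, h2⟩ := hx
    rw [psiB (by linarith) (by linarith)]; ring
  have E8 : ∀ x ∈ Set.Icc (3/2:ℝ) (2:ℝ), psiBarTri x ^ 2 =
      ((-4/3) + (2) * x + (-1) * x^2 + (1/6) * x^3)^2 := by
    intro x hx
    obtain ⟨h1, h2⟩ := hx
    rw [psiA (by linarith) (by linarith)]; ring
  have I1 : IntervalIntegrable (fun s => psiBarTri s ^ 2) MeasureTheory.volume (-2:ℝ) (-3/2:ℝ) :=
    II_of_eqOn _ (by norm_num) E1 (by fun_prop)
  have I2 : IntervalIntegrable (fun s => psiBarTri s ^ 2) MeasureTheory.volume (-3/2:ℝ) (-1:ℝ) :=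
    II_of_eqOn _ (by norm_num) E2 (by fun_prop)
  have I3 : IntervalIntegrable (fun s => psiBarTri s ^ 2) MeasureTheory.volume (-1:ℝ) (-1/2:ℝ) :=
    II_of_eqOn _ (by norm_num) E3 (by fun_prop)
  have I4 : IntervalIntegrable (fun s => psiBarTri s ^ 2) MeasureTheory.volume (-1/2:ℝ) (0:ℝ) :=
    II_of_eqOn _ (by norm_num) E4 (by fun_prop)
  have I5 : IntervalIntegrable (fun s => psiBarTri s ^ 2) MeasureTheory.volume (0:ℝ) (1/2:ℝ) :=
    II_of_eqOn _ (by norm_num) E5 (by fun_prop)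
  have I6 : IntervalIntegrable (fun s => psiBarTri s ^ 2) MeasureTheory.volume (1/2:ℝ) (1:ℝ) :=
    II_of_eqOn _ (by norm_num) E6 (by fun_prop)
  have I7 : IntervalIntegrable (fun s => psiBarTri s ^ 2) MeasureTheory.volume (1:ℝ) (3/2:ℝ) :=
    II_of_eqOn _ (by norm_num) E7 (by fun_prop)
  have I8 : IntervalIntegrable (fun s => psiBarTri s ^ 2) MeasureTheory.volume (3/2:ℝ) (2:ℝ) :=
    II_of_eqOn _ (by norm_num) E8 (by fun_prop)
  have T8 := I8
  have T7 := I7.trans T8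
  have T6 := I6.trans T7
  have T5 := I5.trans T6
  have T4 := I4.trans T5
  have T3 := I3.trans T4
  have T2 := I2.trans T3
  rw [← intervalIntegral.integral_add_adjacent_intervals (a := (-2:ℝ)) (b := (-3/2:ℝ)) (c := (2:ℝ)) I1 T2,
    ← intervalIntegral.integral_add_adjacent_intervals (a := (-3/2:ℝ)) (b := (-1:ℝ)) (c := (2:ℝ)) I2 T3,
    ← intervalIntegral.integral_add_adjacent_intervals (a := (-1:ℝ)) (b := (-1/2:ℝ)) (c := (2:ℝ)) I3 T4,
    ← intervalIntegral.integral_add_adjacent_intervals (a := (-1/2:ℝ)) (b := (0:ℝ)) (c := (2:ℝ)) I4 T5,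
    ← intervalIntegral.integral_add_adjacent_intervals (a := (0:ℝ)) (b := (1/2:ℝ)) (c := (2:ℝ)) I5 T6,
    ← intervalIntegral.integral_add_adjacent_intervals (a := (1/2:ℝ)) (b := (1:ℝ)) (c := (2:ℝ)) I6 T7,
    ← intervalIntegral.integral_add_adjacent_intervals (a := (1:ℝ)) (b := (3/2:ℝ)) (c := (2:ℝ)) I7 I8]
  rw [integral_eq_of_eqOn (by norm_num) E1, integral_eq_of_eqOn (by norm_num) E2, integral_eq_of_eqOn (by norm_num) E3, integral_eq_of_eqOn (by norm_num) E4, integral_eq_of_eqOn (by norm_num) E5, integral_eq_of_eqOn (by norm_num) E6, integral_eq_of_eqOn (by norm_num) E7, integral_eq_of_eqOn (by norm_num) E8]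
  rw [integ_sq_cubic, integ_sq_cubic, integ_sq_cubic, integ_sq_cubic, integ_sq_cubic, integ_sq_cubic, integ_sq_cubic, integ_sq_cubic]
  norm_num
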